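/- arXiv:2008.12467 — 2 statements merged into one kernel-verified Lean document; each statement's English description precedes it below -/
import Mathlib

section
/- Under the logistic partially linear model P(Y=1 | A,X) = expit(β₀A + r₀(X)), for any measurable function m of X (with suitable integrability), E[(Y e^{-β₀A} - (1-Y) e^{r₀(X)})(A - m(X))] = 0. -/
open MeasureTheory Real

noncomputable def expit (t : ℝ) : ℝ := 1 / (1 + Real.exp (-t))

set_option maxHeartbeats 1000000 in
theorem stmt_1 {Ω S : Type*} [MeasurableSpace Ω] [MeasurableSpace S]
    (μ : Measure Ω) [IsProbabilityMeasure μ]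
    (Y A : Ω → ℝ) (X : Ω → S) (β₀ : ℝ) (r₀ m : S → ℝ)
    (hY : ∀ ω, Y ω = 0 ∨ Y ω = 1)
    (hA : Measurable A) (hX : Measurable X) (hr : Measurable r₀) (hm : Measurable m)
    (hint : Integrable (fun ω =>
      (Y ω * Real.exp (-(β₀ * A ω)) - (1 - Y ω) * Real.exp (r₀ (X ω))) * (A ω - m (X ω))) μ)
    (hmodel : μ[Y | MeasurableSpace.comap (fun ω => (A ω, X ω)) inferInstance]
      =ᵐ[μ] fun ω => expit (β₀ * A ω + r₀ (X ω))) :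
    ∫ ω, (Y ω * Real.exp (-(β₀ * A ω)) - (1 - Y ω) * Real.exp (r₀ (X ω)))
      * (A ω - m (X ω)) ∂μ = 0 := by
  have hmodel' := hmodel
  have hAX : Measurable (fun ω => (A ω, X ω)) := hA.prodMk hX
  have hle : (MeasurableSpace.comap (fun ω => (A ω, X ω)) inferInstance : MeasurableSpace Ω) ≤ ‹MeasurableSpace Ω› := hAX.comap_le
  haveI : SigmaFinite (μ.trim hle) := inferInstance
  set F : Ω → ℝ := fun ω =>
      (Y ω * Real.exp (-(β₀ * A ω)) - (1 - Y ω) * Real.exp (r₀ (X ω))) * (A ω - m (X ω))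
      with hF
  set f : Ω → ℝ := fun ω =>
      (A ω - m (X ω)) * (Real.exp (-(β₀ * A ω)) + Real.exp (r₀ (X ω))) with hfdef
  set c : Ω → ℝ := fun ω => expit (β₀ * A ω + r₀ (X ω)) with hcdef
  -- positivity / bounds of c
  have hc_pos : ∀ ω, 0 < c ω := by
    intro ω
    show 0 < expit (β₀ * A ω + r₀ (X ω))
    unfold expit; positivity
  have hc_le : ∀ ω, c ω ≤ 1 := by
    intro ω
    have h1 : (0 : ℝ) < Real.exp (-(β₀ * A ω + r₀ (X ω))) := Real.exp_pos _
    show expit (β₀ * A ω + r₀ (X ω)) ≤ 1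
    unfold expit
    rw [div_le_one (by positivity)]
    linarith
  -- Y is integrable (otherwise condexp would be 0, contradicting hmodel)
  have hYint : Integrable Y μ := by
    by_contra h
    rw [condExp_of_not_integrable h] at hmodel'
    obtain ⟨ω, hω⟩ := hmodel'.exists
    simp only [Pi.zero_apply] at hω
    exact (hc_pos ω).ne' hω.symm
  -- key algebraic identity
  have hFf : ∀ ω, F ω = f ω * (Y ω - c ω) := by
    intro ω
    have hne : (0 : ℝ) < 1 + Real.exp (-(β₀ * A ω + r₀ (X ω))) := by positivity
    have hexp : Real.exp (-(β₀ * A ω)) =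
        Real.exp (r₀ (X ω)) * Real.exp (-(β₀ * A ω + r₀ (X ω))) := by
      rw [← Real.exp_add]; ring_nf
    show (Y ω * Real.exp (-(β₀ * A ω)) - (1 - Y ω) * Real.exp (r₀ (X ω))) * (A ω - m (X ω))
      = (A ω - m (X ω)) * (Real.exp (-(β₀ * A ω)) + Real.exp (r₀ (X ω)))
        * (Y ω - expit (β₀ * A ω + r₀ (X ω)))
    unfold expit
    field_simp
    rw [hexp]; ring
  -- f and c are measurable w.r.t. the sub-σ-algebra
  have hpair : Measurable[(MeasurableSpace.comap (fun ω => (A ω, X ω)) inferInstance : MeasurableSpace Ω)] (fun ω => (A ω, X ω)) :=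
    measurable_iff_comap_le.mpr le_rfl
  have hfG : Measurable[(MeasurableSpace.comap (fun ω => (A ω, X ω)) inferInstance : MeasurableSpace Ω)] f := by
    have hg : Measurable (fun p : ℝ × S => (p.1 - m p.2) *
        (Real.exp (-(β₀ * p.1)) + Real.exp (r₀ p.2))) := by
      apply Measurable.mul
      · exact measurable_fst.sub (hm.comp measurable_snd)
      · exact (Real.measurable_exp.comp ((measurable_const.mul measurable_fst).neg)).add
          (Real.measurable_exp.comp (hr.comp measurable_snd))
    exact hg.comp hpair
  have hexpit : Measurable expit := by
    have h1 : Measurable fun t : ℝ => Real.exp (-t) := Real.measurable_exp.comp measurable_neg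
    unfold expit
    exact measurable_const.div (measurable_const.add h1)
  have hcG : Measurable[(MeasurableSpace.comap (fun ω => (A ω, X ω)) inferInstance : MeasurableSpace Ω)] c := by
    have hg : Measurable (fun p : ℝ × S => β₀ * p.1 + r₀ p.2) :=
      (measurable_const.mul measurable_fst).add (hr.comp measurable_snd)
    exact hexpit.comp (hg.comp hpair)
  have hfMeas : Measurable f := hfG.mono hle le_rfl
  have hcMeas : Measurable c := hcG.mono hle le_rfl
  -- truncation sets
  set s : ℕ → Set Ω := fun n => f ⁻¹' Set.Icc (-(n : ℝ)) n with hs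
  have hsMeasG : ∀ n, MeasurableSet[(MeasurableSpace.comap (fun ω => (A ω, X ω)) inferInstance : MeasurableSpace Ω)] (s n) := fun n =>
    hfG measurableSet_Icc
  have hsMeas : ∀ n, MeasurableSet (s n) := fun n => hle _ (hsMeasG n)
  have hsmem : ∀ (n : ℕ) ω, |f ω| ≤ (n : ℝ) → ω ∈ s n := fun n ω h => abs_le.mp h
  set fn : ℕ → Ω → ℝ := fun n => (s n).indicator f with hfn
  have hfn_bdd : ∀ n ω, |fn n ω| ≤ n := by
    intro n ω
    by_cases hω : ω ∈ s n
    · have habs : |f ω| ≤ (n : ℝ) := abs_le.mpr hω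
      simpa [hfn, Set.indicator_of_mem hω] using habs
    · simp [hfn, Set.indicator_of_notMem hω]
  have hfnG : ∀ n, Measurable[(MeasurableSpace.comap (fun ω => (A ω, X ω)) inferInstance : MeasurableSpace Ω)] (fn n) := fun n => hfG.indicator (hsMeasG n)
  have hfnMeas : ∀ n, Measurable (fn n) := fun n => (hfnG n).mono hle le_rfl
  -- split identity for truncated function
  have hsplit : ∀ n ω, (s n).indicator F ω = fn n ω * Y ω - fn n ω * c ω := by
    intro n ω
    by_cases hω : ω ∈ s n
    · rw [Set.indicator_of_mem hω, hFf ω, hfn]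
      simp only [Set.indicator_of_mem hω]
      ring
    · simp [hfn, Set.indicator_of_notMem hω]
  -- integrability of the pieces
  have hfnY_int : ∀ n, Integrable (fun ω => fn n ω * Y ω) μ := by
    intro n
    refine Integrable.mono' (hYint.abs.const_mul n) ((hfnMeas n).aestronglyMeasurable.mul
      hYint.1) (Filter.Eventually.of_forall fun ω => ?_)
    rw [norm_mul]
    calc ‖fn n ω‖ * ‖Y ω‖ ≤ (n : ℝ) * ‖Y ω‖ := by
            apply mul_le_mul_of_nonneg_right _ (norm_nonneg _)
            simpa [Real.norm_eq_abs] using hfn_bdd n ω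
      _ = (n : ℝ) * |Y ω| := by rw [Real.norm_eq_abs]
  have hfnc_int : ∀ n, Integrable (fun ω => fn n ω * c ω) μ := by
    intro n
    refine Integrable.mono' (integrable_const (n : ℝ)) ((hfnMeas n).aestronglyMeasurable.mul
      hcMeas.aestronglyMeasurable) (Filter.Eventually.of_forall fun ω => ?_)
    rw [norm_mul]
    calc ‖fn n ω‖ * ‖c ω‖ ≤ (n : ℝ) * 1 := by
            apply mul_le_mul
            · simpa [Real.norm_eq_abs] using hfn_bdd n ω
            · rw [Real.norm_eq_abs, abs_of_pos (hc_pos ω)]; exact hc_le ω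
            · exact norm_nonneg _
            · exact Nat.cast_nonneg n
      _ = (n : ℝ) := mul_one _
  -- the truncated integrals vanish
  have key : ∀ n : ℕ, ∫ ω, (s n).indicator F ω ∂μ = 0 := by
    intro n
    have h1 : ∫ ω, (s n).indicator F ω ∂μ
        = ∫ ω, fn n ω * Y ω ∂μ - ∫ ω, fn n ω * c ω ∂μ := by
      rw [← integral_sub (hfnY_int n) (hfnc_int n)]
      exact integral_congr_ae (Filter.Eventually.of_forall fun ω => hsplit n ω)
    have h2 : ∫ ω, fn n ω * Y ω ∂μ = ∫ ω, fn n ω * c ω ∂μ := by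
      have hpull : μ[fun ω => fn n ω * Y ω | (MeasurableSpace.comap (fun ω => (A ω, X ω)) inferInstance : MeasurableSpace Ω)]
          =ᵐ[μ] fun ω => fn n ω * (μ[Y | (MeasurableSpace.comap (fun ω => (A ω, X ω)) inferInstance : MeasurableSpace Ω)]) ω := by
        have := condExp_mul_of_stronglyMeasurable_left (μ := μ) (m := (MeasurableSpace.comap (fun ω => (A ω, X ω)) inferInstance : MeasurableSpace Ω))
          (hfnG n).stronglyMeasurable (g := Y) (by exact hfnY_int n) hYint
        exact this
      calc ∫ ω, fn n ω * Y ω ∂μ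
          = ∫ ω, (μ[fun ω => fn n ω * Y ω | (MeasurableSpace.comap (fun ω => (A ω, X ω)) inferInstance : MeasurableSpace Ω)]) ω ∂μ :=
            (integral_condExp hle).symm
        _ = ∫ ω, fn n ω * (μ[Y | (MeasurableSpace.comap (fun ω => (A ω, X ω)) inferInstance : MeasurableSpace Ω)]) ω ∂μ := integral_congr_ae hpull
        _ = ∫ ω, fn n ω * c ω ∂μ := by
            refine integral_congr_ae ?_
            filter_upwards [hmodel'] with ω hω
            rw [hω]
    rw [h1, h2, sub_self]
  -- dominated convergence
  have hlim : Filter.Tendsto (fun n : ℕ => ∫ ω, (s n).indicator F ω ∂μ) Filter.atTop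
      (nhds (∫ ω, F ω ∂μ)) := by
    refine tendsto_integral_of_dominated_convergence (fun ω => |F ω|)
      (fun n => hint.1.indicator (hsMeas n)) hint.abs
      (fun n => Filter.Eventually.of_forall fun ω => ?_)
      (Filter.Eventually.of_forall fun ω => ?_)
    · by_cases hω : ω ∈ s n
      · simp [Set.indicator_of_mem hω, Real.norm_eq_abs]
      · simp [Set.indicator_of_notMem hω, abs_nonneg]
    · refine Filter.Tendsto.congr' ?_ tendsto_const_nhds
      rw [Filter.EventuallyEq, Filter.eventually_atTop]
      obtain ⟨N, hN⟩ := exists_nat_ge (|f ω|)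
      refine ⟨N, fun n hn => ?_⟩
      have hmem : ω ∈ s n := hsmem n ω (le_trans hN (by exact_mod_cast hn))
      exact (Set.indicator_of_mem hmem F).symm
  have h0 : Filter.Tendsto (fun n : ℕ => ∫ ω, (s n).indicator F ω ∂μ) Filter.atTop (nhds 0) := by
    simp only [key]
    exact tendsto_const_nhds
  exact tendsto_nhds_unique hlim h0
end

section
/- Let φ be a bounded measurable function of X. Under the model P(Y=1|A,X) = expit(β₀A + r₀(X)), for any measurable function m of X, E[φ(X) e^{-r₀(X)} (Y e^{-β₀A} - (1-Y)e^{r₀(X)})(A - m(X))] = 0. -/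
open MeasureTheory Real

theorem stmt_12 {Ω S : Type*} [MeasurableSpace Ω] [MeasurableSpace S]
    (μ : Measure Ω) [IsProbabilityMeasure μ]
    (Y A : Ω → ℝ) (X : Ω → S) (β₀ : ℝ) (r₀ m φ : S → ℝ)
    (hY : ∀ ω, Y ω = 0 ∨ Y ω = 1)
    (hA : Measurable A) (hX : Measurable X) (hr : Measurable r₀)
    (hm : Measurable m) (hφ : Measurable φ)
    (hφbd : ∃ C : ℝ, ∀ x, |φ x| ≤ C)
    (hmodel : μ[Y | MeasurableSpace.comap (fun ω => (A ω, X ω)) inferInstance]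
      =ᵐ[μ] fun ω => expit (β₀ * A ω + r₀ (X ω)))
    (hint : Integrable (fun ω =>
      φ (X ω) * Real.exp (-(r₀ (X ω)))
        * (Y ω * Real.exp (-(β₀ * A ω)) - (1 - Y ω) * Real.exp (r₀ (X ω)))
        * (A ω - m (X ω))) μ) :
    ∫ ω, φ (X ω) * Real.exp (-(r₀ (X ω)))
      * (Y ω * Real.exp (-(β₀ * A ω)) - (1 - Y ω) * Real.exp (r₀ (X ω)))
      * (A ω - m (X ω)) ∂μ = 0 := by
  have hm_le : MeasurableSpace.comap (fun ω => (A ω, X ω)) inferInstance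
      ≤ ‹MeasurableSpace Ω› := (hA.prodMk hX).comap_le
  set mG := MeasurableSpace.comap (fun ω => (A ω, X ω)) inferInstance with hmG
  haveI : IsFiniteMeasure (μ.trim hm_le) := isFiniteMeasure_trim hm_le
  haveI : SigmaFinite (μ.trim hm_le) := inferInstance
  -- Y is integrable
  have hYint : Integrable Y μ := by
    by_contra h
    have h0 : μ[Y|mG] = 0 := condExp_of_not_integrable h
    rw [h0] at hmodel
    obtain ⟨ω, hω⟩ := hmodel.exists
    have hpos : 0 < expit (β₀ * A ω + r₀ (X ω)) := by
      unfold expit; positivity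
    simp only [Pi.zero_apply] at hω
    rw [← hω] at hpos
    exact lt_irrefl 0 hpos
  set f : Ω → ℝ := fun ω => φ (X ω) * Real.exp (-(r₀ (X ω)))
      * (Real.exp (-(β₀ * A ω)) + Real.exp (r₀ (X ω))) * (A ω - m (X ω)) with hf
  set g : Ω → ℝ := fun ω => Y ω - (μ[Y|mG]) ω with hg
  have hgint : Integrable g μ := hYint.sub integrable_condExp
  -- f is mG-strongly measurable
  have hfmeas : StronglyMeasurable[mG] f := by
    have hpair : Measurable[mG] (fun ω => (A ω, X ω)) :=
      measurable_iff_comap_le.mpr le_rfl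
    set F : ℝ × S → ℝ := fun p => φ p.2 * Real.exp (-(r₀ p.2))
        * (Real.exp (-(β₀ * p.1)) + Real.exp (r₀ p.2)) * (p.1 - m p.2) with hF
    have hFmeas : Measurable F := by
      apply Measurable.mul
      apply Measurable.mul
      apply Measurable.mul
      · exact hφ.comp measurable_snd
      · exact ((hr.comp measurable_snd).neg).exp
      · exact (((measurable_const.mul measurable_fst).neg).exp).add
          ((hr.comp measurable_snd).exp)
      · exact measurable_fst.sub (hm.comp measurable_snd)
    exact (hFmeas.comp hpair).stronglyMeasurable
  -- pointwise identity
  have key : ∀ ω, f ω * (Y ω - expit (β₀ * A ω + r₀ (X ω)))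
      = φ (X ω) * Real.exp (-(r₀ (X ω)))
      * (Y ω * Real.exp (-(β₀ * A ω)) - (1 - Y ω) * Real.exp (r₀ (X ω)))
      * (A ω - m (X ω)) := by
    intro ω
    have e1 : Real.exp (β₀ * A ω) ≠ 0 := Real.exp_ne_zero _
    have e2 : Real.exp (r₀ (X ω)) ≠ 0 := Real.exp_ne_zero _
    have h3 : (1 : ℝ) + (Real.exp (β₀ * A ω))⁻¹ * (Real.exp (r₀ (X ω)))⁻¹ ≠ 0 := by
      positivity
    simp only [expit, hf, neg_add, Real.exp_add, Real.exp_neg]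
    field_simp
    ring
  have hae : (fun ω => f ω * g ω) =ᵐ[μ] fun ω =>
      φ (X ω) * Real.exp (-(r₀ (X ω)))
      * (Y ω * Real.exp (-(β₀ * A ω)) - (1 - Y ω) * Real.exp (r₀ (X ω)))
      * (A ω - m (X ω)) := by
    filter_upwards [hmodel] with ω hω
    simp only [hg]
    rw [hω, key ω]
  have hfgint : Integrable (f * g) μ := hint.congr hae.symm
  have hcond : μ[f * g|mG] =ᵐ[μ] f * μ[g|mG] :=
    condExp_mul_of_stronglyMeasurable_left hfmeas hfgint hgint
  have hg0 : μ[g|mG] =ᵐ[μ] 0 := by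
    have h1 := condExp_sub (m := mG) (μ := μ) hYint (integrable_condExp (m := mG) (f := Y))
    have h2 : μ[μ[Y|mG]|mG] =ᵐ[μ] μ[Y|mG] :=
      condExp_condExp_of_le le_rfl hm_le
    have hgeq : g = Y - μ[Y|mG] := rfl
    rw [hgeq]
    filter_upwards [h1, h2] with ω hω1 hω2
    simp [hω1, hω2]
  calc ∫ ω, φ (X ω) * Real.exp (-(r₀ (X ω)))
      * (Y ω * Real.exp (-(β₀ * A ω)) - (1 - Y ω) * Real.exp (r₀ (X ω)))
      * (A ω - m (X ω)) ∂μ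
      = ∫ ω, (f * g) ω ∂μ := integral_congr_ae hae.symm
    _ = ∫ ω, (μ[f * g|mG]) ω ∂μ := (integral_condExp (f := f * g) hm_le).symm
    _ = ∫ ω, (0 : ℝ) ∂μ := by
        apply integral_congr_ae
        filter_upwards [hcond, hg0] with ω h1 h2
        simp [h1, h2]
    _ = 0 := integral_zero _ _
end
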